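/- Let U be an irreducible almost upper triangular transition matrix on ℕ and, for each n, let ρ^{(n)} be an invariant probability distribution of the projection U^{(n)} of U onto {0,…,n} (extended by 0 to all of ℕ). Then for any π : ℕ → ℝ with π a ≥ 0 for all a and π not identically 0: π is an invariant measure for U if and only if there exists a sequence of real numbers (c_n) such that for every a ∈ ℕ, c_n · ρ^{(n)} a → π a as n → ∞. -/

import Mathlib

/-- Irreducibility of a matrix on `ℕ`. -/
def MatIrreducible (M : ℕ → ℕ → ℝ) : Prop :=
  ∀ i j : ℕ, ∃ (n : ℕ) (x : ℕ → ℕ), 0 < n ∧ x 0 = i ∧ x n = j ∧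
    ∀ k, k < n → 0 < M (x k) (x (k + 1))

/-- The projection `M^{(n)}` of `M` onto `{0,…,n}`: `M^{(n)} i j = M i j` for
`j ≤ n − 1`, `M^{(n)} i n = ∑_{j ≥ n} M i j` (and `0` beyond `n`). -/
noncomputable def projTM (M : ℕ → ℕ → ℝ) (n : ℕ) : ℕ → ℕ → ℝ :=
  fun i j =>
    if j < n then M i j
    else if j = n then (∑' k : ℕ, if n ≤ k then M i k else 0)
    else 0


lemma aux_Upos (U : ℕ → ℕ → ℝ)
    (hut : ∀ i j, j + 1 < i → U i j = 0)
    (hirr : ∀ i j : ℕ, ∃ (n : ℕ) (x : ℕ → ℕ), 0 < n ∧ x 0 = i ∧ x n = j ∧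
      ∀ k, k < n → 0 < U (x k) (x (k + 1))) (b : ℕ) : 0 < U (b+1) b := by
  classical
  obtain ⟨n, x, hn, hx0, hxn, hstep⟩ := hirr (b+1) b
  have hex : ∃ k, x (k+1) ≤ b ∧ k < n :=
    ⟨n-1, by have h : n - 1 + 1 = n := by omega
             rw [h, hxn], by omega⟩
  let k := Nat.find hex
  have hk1 : x (k+1) ≤ b := (Nat.find_spec hex).1
  have hk2 : k < n := (Nat.find_spec hex).2
  have hmin : ∀ m, m < k → ¬(x (m+1) ≤ b ∧ m < n) := fun m hm => Nat.find_min hex hm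
  have hbx : b < x k := by
    rcases Nat.eq_zero_or_pos k with h0 | h0
    · rw [h0, hx0]; omega
    · by_contra hcon
      push_neg at hcon
      have heq : k - 1 + 1 = k := by omega
      exact hmin (k-1) (by omega) ⟨by rw [heq]; omega, by omega⟩
  have hpos := hstep k hk2
  have hle : x k ≤ x (k+1) + 1 := by
    by_contra h
    have h0 := hut (x k) (x (k+1)) (by omega)
    rw [h0] at hpos
    exact lt_irrefl _ hpos
  have e1 : x k = b + 1 := by omega
  have e2 : x (k+1) = b := by omega
  rw [← e1, ← e2]; exact hpos

lemma aux_key (U : ℕ → ℕ → ℝ) (n : ℕ) (w z : ℕ → ℝ)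
    (hU : ∀ b, 0 < U (b+1) b)
    (hw : ∀ b, b < n → w (b+1) * U (b+1) b = w b - ∑ a ∈ Finset.range (b+1), w a * U a b)
    (hz : ∀ b, b < n → z (b+1) * U (b+1) b = z b - ∑ a ∈ Finset.range (b+1), z a * U a b) :
    ∀ a, a ≤ n → z 0 * w a = w 0 * z a := by
  have H : ∀ a, (∀ m, m < a → (m ≤ n → z 0 * w m = w 0 * z m)) →
      (a ≤ n → z 0 * w a = w 0 * z a) := by
    intro a ih ha
    match a, ih, ha with
    | 0, _, _ => ring
    | b+1, ih, ha =>
      have hb : b < n := by omega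
      have hih : ∀ m, m ≤ b → z 0 * w m = w 0 * z m := fun m hm => ih m (by omega) (by omega)
      have hU' : U (b+1) b ≠ 0 := (hU b).ne'
      apply mul_right_cancel₀ hU'
      calc z 0 * w (b+1) * U (b+1) b = z 0 * (w (b+1) * U (b+1) b) := by ring
        _ = z 0 * (w b - ∑ a ∈ Finset.range (b+1), w a * U a b) := by rw [hw b hb]
        _ = z 0 * w b - ∑ a ∈ Finset.range (b+1), z 0 * w a * U a b := by
            rw [mul_sub, Finset.mul_sum]; simp [mul_assoc]
        _ = w 0 * z b - ∑ a ∈ Finset.range (b+1), w 0 * z a * U a b := by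
            rw [hih b le_rfl]; congr 1
            apply Finset.sum_congr rfl
            intro a ha'
            rw [hih a (by simpa using Nat.lt_succ_iff.mp (Finset.mem_range.mp ha'))]
        _ = w 0 * (z b - ∑ a ∈ Finset.range (b+1), z a * U a b) := by
            rw [mul_sub, Finset.mul_sum]; simp [mul_assoc]
        _ = w 0 * (z (b+1) * U (b+1) b) := by rw [hz b hb]
        _ = w 0 * z (b+1) * U (b+1) b := by ring
  exact fun a => Nat.strong_induction_on a H

lemma aux_vanish (U : ℕ → ℕ → ℝ) (n : ℕ) (w : ℕ → ℝ)
    (hU : ∀ b, 0 < U (b+1) b)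
    (hw : ∀ b, b < n → w (b+1) * U (b+1) b = w b - ∑ a ∈ Finset.range (b+1), w a * U a b)
    (h0 : w 0 = 0) : ∀ a, a ≤ n → w a = 0 := by
  have H : ∀ a, (∀ m, m < a → (m ≤ n → w m = 0)) → (a ≤ n → w a = 0) := by
    intro a ih ha
    match a, ih, ha with
    | 0, _, _ => exact h0
    | b+1, ih, ha =>
      have hb : b < n := by omega
      have hU' : U (b+1) b ≠ 0 := (hU b).ne'
      have := hw b hb
      have hz : ∀ a ∈ Finset.range (b+1), w a * U a b = 0 := by
        intro a ha'
        have haa : a < b + 1 := Finset.mem_range.mp ha'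
        rw [ih a (by omega) (by omega), zero_mul]
      rw [Finset.sum_eq_zero hz, ih b (by omega) (by omega), sub_zero] at this
      exact (mul_eq_zero.mp this).resolve_right hU'
  exact fun a => Nat.strong_induction_on a H

/-- Theorem 2.7 (i): a nonnegative nonzero `π` is invariant for the irreducible almost
upper triangular transition matrix `U` iff there are constants `c n` such that
`c n · ρ^{(n)} → π` pointwise, where `ρ^{(n)}` is the invariant probability distribution
of the projection `U^{(n)}` (extended by `0`). -/
theorem invariant_iff_rescaled_projection_limit (U : ℕ → ℕ → ℝ)
    (hnn : ∀ i j, 0 ≤ U i j)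
    (hrow : ∀ i, HasSum (fun j => U i j) 1)
    (hut : ∀ i j, j + 1 < i → U i j = 0)
    (hirr : MatIrreducible U)
    (ρ : ℕ → ℕ → ℝ)
    (hρnn : ∀ n a, 0 ≤ ρ n a)
    (hρzero : ∀ n a, n < a → ρ n a = 0)
    (hρsum : ∀ n, ∑ a ∈ Finset.range (n + 1), ρ n a = 1)
    (hρinv : ∀ n, ∀ b ≤ n, ∑ a ∈ Finset.range (n + 1), ρ n a * projTM U n a b = ρ n b)
    (pi : ℕ → ℝ) (hpinn : ∀ a, 0 ≤ pi a) (hpine : ∃ a, pi a ≠ 0) :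
    (∀ b, HasSum (fun a => pi a * U a b) (pi b)) ↔
      ∃ c : ℕ → ℝ, ∀ a,
        Filter.Tendsto (fun n => c n * ρ n a) Filter.atTop (nhds (pi a)) := by
  have hU : ∀ b, 0 < U (b+1) b := aux_Upos U hut hirr
  have hρs : ∀ n b, b < n → ∑ a ∈ Finset.range (b+2), ρ n a * U a b = ρ n b := by
    intro n b hb
    have h1 := hρinv n b (le_of_lt hb)
    have h2 : ∀ a ∈ Finset.range (n+1), ρ n a * projTM U n a b = ρ n a * U a b := by
      intro a _
      simp only [projTM, if_pos hb]
    rw [Finset.sum_congr rfl h2] at h1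
    rw [← h1]
    apply Finset.sum_subset
    · exact Finset.range_subset_range.mpr (by omega)
    · intro a _ hna
      have h4 : ¬ a < b + 2 := fun h => hna (Finset.mem_range.mpr h)
      rw [hut a b (by omega), mul_zero]
  have hρrec : ∀ n b, b < n →
      ρ n (b+1) * U (b+1) b = ρ n b - ∑ a ∈ Finset.range (b+1), ρ n a * U a b := by
    intro n b hb
    have := hρs n b hb
    rw [Finset.sum_range_succ] at this
    linarith
  have hρ0 : ∀ n, 0 < ρ n 0 := by
    intro n
    rcases (hρnn n 0).lt_or_eq with h | h
    · exact h
    · exfalso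
      have hv := aux_vanish U n (ρ n) hU (hρrec n) h.symm
      have h5 : ∑ a ∈ Finset.range (n+1), ρ n a = 0 :=
        Finset.sum_eq_zero (fun a ha => hv a (by have := Finset.mem_range.mp ha; omega))
      rw [hρsum n] at h5
      norm_num at h5
  constructor
  · intro hinv
    have hπs : ∀ b, ∑ a ∈ Finset.range (b+2), pi a * U a b = pi b := by
      intro b
      have h1 : HasSum (fun a => pi a * U a b)
          (∑ a ∈ Finset.range (b+2), pi a * U a b) := by
        apply hasSum_sum_of_ne_finset_zero
        intro a ha
        have h2 : ¬ a < b + 2 := fun h => ha (Finset.mem_range.mpr h)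
        rw [hut a b (by omega), mul_zero]
      exact h1.unique (hinv b)
    have hπrec : ∀ b, pi (b+1) * U (b+1) b = pi b - ∑ a ∈ Finset.range (b+1), pi a * U a b := by
      intro b
      have := hπs b
      rw [Finset.sum_range_succ] at this
      linarith
    refine ⟨fun n => pi 0 / ρ n 0, fun a => ?_⟩
    apply Filter.Tendsto.congr' _ tendsto_const_nhds
    filter_upwards [Filter.eventually_ge_atTop a] with n hna
    have hk := aux_key U n (ρ n) pi hU (hρrec n) (fun b _ => hπrec b) a hna
    have h0 : ρ n 0 ≠ 0 := (hρ0 n).ne'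
    field_simp
    linarith [hk]
  · rintro ⟨c, hc⟩ b
    have hlim : Filter.Tendsto (fun n => ∑ a ∈ Finset.range (b+2), (c n * ρ n a) * U a b)
        Filter.atTop (nhds (∑ a ∈ Finset.range (b+2), pi a * U a b)) := by
      apply tendsto_finset_sum
      intro a _
      exact (hc a).mul_const _
    have heq : (fun n => ∑ a ∈ Finset.range (b+2), (c n * ρ n a) * U a b)
        =ᶠ[Filter.atTop] (fun n => c n * ρ n b) := by
      filter_upwards [Filter.eventually_gt_atTop b] with n hbn
      rw [← hρs n b hbn, Finset.mul_sum]
      exact Finset.sum_congr rfl (fun a _ => by ring)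
    have hS : (∑ a ∈ Finset.range (b+2), pi a * U a b) = pi b :=
      tendsto_nhds_unique (Filter.Tendsto.congr' heq hlim) (hc b)
    have h1 : HasSum (fun a => pi a * U a b)
        (∑ a ∈ Finset.range (b+2), pi a * U a b) := by
      apply hasSum_sum_of_ne_finset_zero
      intro a ha
      have h2 : ¬ a < b + 2 := fun h => ha (Finset.mem_range.mpr h)
      rw [hut a b (by omega), mul_zero]
    rwa [hS] at h1
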